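/- (Theorem 2, Convergence of ECAA) Every sequence Φ₀, Φ₁, …, Φ_k of matchings in which each Φ_{i+1} is the swap matching of Φ_i at some swap-blocking pair of Φ_i consists of pairwise distinct matchings; consequently every such sequence has length k < M^N, and there is no infinite such sequence. In other words, the swap-matching phase of ECAA converges after a finite number of swap operations. -/

import Mathlib

/-- The fiber of a channel `m` under an allocation `Φ`: the set of users assigned to `m`. -/
def fiber {N M : ℕ} (Φ : Fin N → Fin M) (m : Fin M) : Finset (Fin N) :=
  Finset.univ.filter (fun k => Φ k = m)

/-- `Φ` is a matching: every channel serves at most `D` users. -/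
def IsMatching {N M : ℕ} (D : ℕ) (Φ : Fin N → Fin M) : Prop :=
  ∀ m : Fin M, (fiber Φ m).card ≤ D

/-- The swap matching `Φ^{n↔n'}`. -/
def swapMatch {N M : ℕ} (Φ : Fin N → Fin M) (n n' : Fin N) : Fin N → Fin M :=
  fun k => if k = n then Φ n' else if k = n' then Φ n else Φ k

/-- `(n, n')` is a swap-blocking pair for `Φ`. -/
def IsBlockingPair {N M : ℕ} (u : Fin N → Fin M → ℝ) (w : Fin M → Finset (Fin N) → ℝ)
    (Φ : Fin N → Fin M) (n n' : Fin N) : Prop :=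
  Φ n ≠ Φ n' ∧
    (u n (swapMatch Φ n n' n) ≥ u n (Φ n)) ∧
    (u n' (swapMatch Φ n n' n') ≥ u n' (Φ n')) ∧
    (w (Φ n) (fiber (swapMatch Φ n n') (Φ n)) ≥ w (Φ n) (fiber Φ (Φ n))) ∧
    (w (Φ n') (fiber (swapMatch Φ n n') (Φ n')) ≥ w (Φ n') (fiber Φ (Φ n'))) ∧
    ((u n (swapMatch Φ n n' n) > u n (Φ n)) ∨
     (u n' (swapMatch Φ n n' n') > u n' (Φ n')) ∨
     (w (Φ n) (fiber (swapMatch Φ n n') (Φ n)) > w (Φ n) (fiber Φ (Φ n))) ∨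
     (w (Φ n') (fiber (swapMatch Φ n n') (Φ n')) > w (Φ n') (fiber Φ (Φ n'))))


/-- The potential: total utility of all users plus all channels. -/
noncomputable def Pot {N M : ℕ} (u : Fin N → Fin M → ℝ) (w : Fin M → Finset (Fin N) → ℝ)
    (Φ : Fin N → Fin M) : ℝ :=
  (∑ n, u n (Φ n)) + ∑ m, w m (fiber Φ m)

lemma sum_diff_pair {X : Type*} [Fintype X] [DecidableEq X] (a b : X) (hab : a ≠ b)
    (f g : X → ℝ) (h : ∀ x, x ≠ a → x ≠ b → f x = g x) :
    (∑ x, f x) - (∑ x, g x) = (f a - g a) + (f b - g b) := by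
  rw [← Finset.sum_sub_distrib, show f a - g a + (f b - g b) = ∑ x ∈ ({a,b} : Finset X), (f x - g x) by rw [Finset.sum_pair hab]]
  refine (Finset.sum_subset (Finset.subset_univ _) ?_).symm
  intro x _ hx
  simp only [Finset.mem_insert, Finset.mem_singleton, not_or] at hx
  rw [h x hx.1 hx.2, sub_self]

lemma fiber_swap_other {N M : ℕ} (Φ : Fin N → Fin M) (n n' : Fin N) (m : Fin M)
    (hm : Φ n ≠ m) (hm' : Φ n' ≠ m) : fiber (swapMatch Φ n n') m = fiber Φ m := by
  ext x
  simp only [fiber, Finset.mem_filter, Finset.mem_univ, true_and]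
  simp only [swapMatch]
  split_ifs with h1 h2
  · subst h1; exact iff_of_false hm' hm
  · subst h2; exact iff_of_false hm hm'
  · rfl

lemma pot_lt_of_blocking {N M : ℕ} (u : Fin N → Fin M → ℝ) (w : Fin M → Finset (Fin N) → ℝ)
    (Φ : Fin N → Fin M) (n n' : Fin N) (hb : IsBlockingPair u w Φ n n') :
    Pot u w Φ < Pot u w (swapMatch Φ n n') := by
  obtain ⟨hne, h1, h2, h3, h4, h5⟩ := hb
  have hnn' : n ≠ n' := fun h => hne (by rw [h])
  set Φ' := swapMatch Φ n n' with hΦ'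
  have hA : (∑ x, u x (Φ' x)) - (∑ x, u x (Φ x)) =
      (u n (Φ' n) - u n (Φ n)) + (u n' (Φ' n') - u n' (Φ n')) := by
    apply sum_diff_pair n n' hnn'
    intro x hx1 hx2
    simp [hΦ', swapMatch, hx1, hx2]
  have hB : (∑ m, w m (fiber Φ' m)) - (∑ m, w m (fiber Φ m)) =
      (w (Φ n) (fiber Φ' (Φ n)) - w (Φ n) (fiber Φ (Φ n))) +
      (w (Φ n') (fiber Φ' (Φ n')) - w (Φ n') (fiber Φ (Φ n'))) := by
    apply sum_diff_pair (Φ n) (Φ n') hne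
    intro m hm hm'
    rw [fiber_swap_other Φ n n' m hm.symm hm'.symm]
  have key : Pot u w Φ' - Pot u w Φ > 0 := by
    have : Pot u w Φ' - Pot u w Φ =
        ((∑ x, u x (Φ' x)) - (∑ x, u x (Φ x))) +
        ((∑ m, w m (fiber Φ' m)) - (∑ m, w m (fiber Φ m))) := by
      simp only [Pot]; ring
    rw [this, hA, hB]
    rcases h5 with h | h | h | h <;> linarith
  linarith

/-- **Convergence of ECAA.** In any sequence of matchings in which each one is obtained
from the previous one by a swap at a swap-blocking pair, all matchings are pairwise
distinct; consequently the sequence has length `k < M ^ N`, and no infinite such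
sequence exists. -/
theorem ecaa_convergence
    (N M D : ℕ) (hN : 1 ≤ N) (hM : 1 ≤ M) (hD : 1 ≤ D)
    (u : Fin N → Fin M → ℝ) (w : Fin M → Finset (Fin N) → ℝ)
    (Φ : ℕ → (Fin N → Fin M)) (k : ℕ)
    (hmatch : ∀ i ≤ k, IsMatching D (Φ i))
    (hstep : ∀ i < k, ∃ n n' : Fin N,
      IsBlockingPair u w (Φ i) n n' ∧ Φ (i + 1) = swapMatch (Φ i) n n') :
    (∀ i ≤ k, ∀ j ≤ k, i ≠ j → Φ i ≠ Φ j) ∧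
    k < M ^ N ∧
    ¬ ∃ Ψ : ℕ → (Fin N → Fin M), (∀ i, IsMatching D (Ψ i)) ∧
        ∀ i, ∃ n n' : Fin N,
          IsBlockingPair u w (Ψ i) n n' ∧ Ψ (i + 1) = swapMatch (Ψ i) n n' := by
  -- potential strictly increases along the finite sequence
  have hmono : ∀ i j, i < j → j ≤ k → Pot u w (Φ i) < Pot u w (Φ j) := by
    intro i j hij hjk
    induction j with
    | zero => omega
    | succ m ih =>
      obtain ⟨n, n', hb, heq⟩ := hstep m (by omega)
      have hstepm : Pot u w (Φ m) < Pot u w (Φ (m + 1)) := by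
        rw [heq]; exact pot_lt_of_blocking u w (Φ m) n n' hb
      rcases Nat.lt_or_ge i m with h | h
      · exact lt_trans (ih h (by omega)) hstepm
      · have : i = m := by omega
        subst this; exact hstepm
  have hdist : ∀ i ≤ k, ∀ j ≤ k, i ≠ j → Φ i ≠ Φ j := by
    intro i hi j hj hij heq
    rcases Nat.lt_or_ge i j with h | h
    · exact absurd (congrArg (Pot u w) heq) (ne_of_lt (hmono i j h hj))
    · exact absurd (congrArg (Pot u w) heq.symm) (ne_of_lt (hmono j i (by omega) hi))
  refine ⟨hdist, ?_, ?_⟩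
  · -- k < M ^ N
    have hinj : Function.Injective (fun i : Fin (k + 1) => Φ i.val) := by
      intro i j hij
      by_contra h
      exact hdist i.val (by omega) j.val (by omega)
        (fun hv => h (Fin.ext hv)) hij
    have := Fintype.card_le_of_injective _ hinj
    simpa [Fintype.card_fun] using this
  · -- no infinite sequence
    rintro ⟨Ψ, -, hΨ⟩
    have hsm : StrictMono (fun i => Pot u w (Ψ i)) := by
      apply strictMono_nat_of_lt_succ
      intro i
      obtain ⟨n, n', hb, heq⟩ := hΨ i
      rw [heq]; exact pot_lt_of_blocking u w (Ψ i) n n' hb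
    have hinjΨ : Function.Injective Ψ := fun i j h =>
      hsm.injective (congrArg (Pot u w) h)
    obtain ⟨i, j, hij, heq⟩ := Finite.exists_ne_map_eq_of_infinite Ψ
    exact hij (hinjΨ heq)
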